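/- arXiv:2103.04252 — 2 statements merged into one kernel-verified Lean document; each statement's English description precedes it below -/
import Mathlib

section
/- Let K be a finite simplicial complex with vertex set V, f, g : V → ℝ arbitrary, and h : V → ℝ nowhere vanishing. Define φ : Cₙ(K;ℝ) → Cₙ(K;ℝ) on basis n-simplices by φ({v₀,…,vₙ}) = (h(v₀)h(v₁)⋯h(vₙ))⁻¹ {v₀,…,vₙ}, extended linearly. Then φ is a chain map from the chain complex with f-weighted boundary ∂ⁿᶠ to the chain complex with (fh)-weighted boundary ∂ⁿᶠʰ, i.e., ∂ₙᶠʰ ∘ φ = φ ∘ ∂ₙᶠ for all n. -/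
open Finset

variable {V : Type} [Fintype V] [LinearOrder V]

/-- `K` is an abstract simplicial complex: simplices are nonempty and
`K` is closed under nonempty subsets. -/
def IsComplex (K : Finset (Finset V)) : Prop :=
  ∀ σ ∈ K, σ.Nonempty ∧ ∀ τ ⊆ σ, τ.Nonempty → τ ∈ K

/-- Coefficient of `τ` in the `f`-weighted boundary of the simplex `σ`:
`∂ᶠ σ = Σᵢ (-1)ⁱ f(vᵢ) (σ \ vᵢ)` with the vertices of `σ` in increasing order. -/
noncomputable def bdCoef (f : V → ℝ) (τ σ : Finset V) : ℝ :=
  ∑ i : Fin (σ.sort (· ≤ ·)).length,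
    if τ = σ.erase ((σ.sort (· ≤ ·)).get i)
    then (-1 : ℝ) ^ (i : ℕ) * f ((σ.sort (· ≤ ·)).get i) else 0

/-- The `f`-weighted boundary operator on the free vector space on all simplices. -/
noncomputable def wbd (f : V → ℝ) : (Finset V → ℝ) →ₗ[ℝ] (Finset V → ℝ) :=
  (Matrix.of (bdCoef f)).mulVecLin

/-- `Cₙ(K;ℝ)`: the span of the `n`-simplices of `K`. -/
noncomputable def chainSp (K : Finset (Finset V)) (n : ℕ) : Submodule ℝ (Finset V → ℝ) :=
  Submodule.span ℝ {x | ∃ σ ∈ K, σ.card = n + 1 ∧ x = Pi.single σ (1 : ℝ)}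

/-- The `g`-weighted bilinear form `⟨σ,τ⟩_g = g(σ)g(τ)δ(σ,τ)`, extended bilinearly. -/
noncomputable def wB (g : V → ℝ) (a b : Finset V → ℝ) : ℝ :=
  ∑ σ : Finset V, (∏ v ∈ σ, g v) ^ 2 * a σ * b σ

/-- `K_g^×`: the simplices of `K` whose `g`-weight is nonzero. -/
noncomputable def posPart (K : Finset (Finset V)) (g : V → ℝ) : Finset (Finset V) :=
  K.filter (fun σ => (∏ v ∈ σ, g v) ≠ 0)

/-- `n`-cycles of the `f`-weighted chain complex of `K`. -/
noncomputable def cycles (K : Finset (Finset V)) (f : V → ℝ) (n : ℕ) :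
    Submodule ℝ (Finset V → ℝ) :=
  chainSp K n ⊓ LinearMap.ker (wbd f)

/-- `n`-boundaries of the `f`-weighted chain complex of `K`. -/
noncomputable def bdries (K : Finset (Finset V)) (f : V → ℝ) (n : ℕ) :
    Submodule ℝ (Finset V → ℝ) :=
  Submodule.map (wbd f) (chainSp K (n + 1))

/-- The `n`-th `f`-weighted homology `Hₙ(K,f;ℝ) = Ker ∂ₙᶠ / Im ∂ₙ₊₁ᶠ`. -/
noncomputable abbrev wH (K : Finset (Finset V)) (f : V → ℝ) (n : ℕ) :=
  ↥(cycles K f n) ⧸ Submodule.comap (cycles K f n).subtype (bdries K f n)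

/-- The rescaling chain map `σ ↦ (Π_{v∈σ} h(v))⁻¹ σ`. -/
noncomputable def resc (h : V → ℝ) : (Finset V → ℝ) →ₗ[ℝ] (Finset V → ℝ) :=
  (Matrix.diagonal fun σ => (∏ v ∈ σ, h v)⁻¹).mulVecLin

lemma key_coef (f h : V → ℝ) (hh : ∀ v : V, h v ≠ 0) (τ σ : Finset V) :
    bdCoef (fun v => f v * h v) τ σ * (∏ v ∈ σ, h v)⁻¹
      = (∏ v ∈ τ, h v)⁻¹ * bdCoef f τ σ := by
  unfold bdCoef
  rw [Finset.sum_mul, Finset.mul_sum]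
  refine Finset.sum_congr rfl fun i _ => ?_
  set v := (σ.sort (· ≤ ·)).get i with hv_def
  have hv : v ∈ σ := (Finset.mem_sort _).mp (List.get_mem _ _)
  by_cases hτ : τ = σ.erase v
  · simp only [if_pos hτ]
    rw [← Finset.mul_prod_erase σ h hv, hτ]
    have h1 : h v ≠ 0 := hh v
    rw [mul_inv]
    field_simp
  · simp [hτ]

/-- The rescaling map `φ(σ) = (Π_{v∈σ} h(v))⁻¹ σ` is a chain map from the
`f`-weighted chain complex of `K` to the `fh`-weighted one: `∂ᶠʰ ∘ φ = φ ∘ ∂ᶠ`. -/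
theorem stmt8 (K : Finset (Finset V)) (hK : IsComplex K) (f h : V → ℝ)
    (hh : ∀ v : V, h v ≠ 0) :
    ∀ n : ℕ, ∀ c ∈ chainSp K n,
      wbd (fun v => f v * h v) (resc h c) = resc h (wbd f c) := by
  intro n c _
  funext τ
  simp only [wbd, resc, Matrix.mulVecLin_apply, Matrix.mulVec, dotProduct,
    Matrix.of_apply, Matrix.diagonal_apply, Matrix.mulVec_diagonal, ite_mul, zero_mul,
    Finset.sum_ite_eq, Finset.mem_univ, if_pos]
  rw [Finset.mul_sum]
  refine Finset.sum_congr rfl fun σ _ => ?_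
  have := key_coef f h hh τ σ
  calc bdCoef (fun v => f v * h v) τ σ * ((∏ v ∈ σ, h v)⁻¹ * c σ)
      = bdCoef (fun v => f v * h v) τ σ * (∏ v ∈ σ, h v)⁻¹ * c σ := by ring
    _ = (∏ v ∈ τ, h v)⁻¹ * bdCoef f τ σ * c σ := by rw [this]
    _ = (∏ v ∈ τ, h v)⁻¹ * (bdCoef f τ σ * c σ) := by ring
end

section
/- Let K be a finite simplicial complex with vertex set V and f : V → ℝ nowhere vanishing. Then for each n ≥ 0, the f-weighted homology Hₙ(K, f, f; ℝ) (taking both weights equal to f) is linearly isomorphic to the ordinary simplicial homology Hₙ(K; ℝ) with real coefficients. -/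
open Finset

variable {V : Type} [Fintype V] [LinearOrder V]

/-! ### Auxiliary material -/

/-- The diagonal weight `d(σ) = ∏_{v∈σ} f v`. -/
noncomputable def dW (f : V → ℝ) (σ : Finset V) : ℝ := ∏ v ∈ σ, f v

lemma dW_ne {f : V → ℝ} (hf : ∀ v, f v ≠ 0) (σ : Finset V) : dW f σ ≠ 0 :=
  Finset.prod_ne_zero_iff.2 fun v _ => hf v

/-- The rescaling chain isomorphism `σ ↦ (∏_{v∈σ} f v) • σ`. -/
noncomputable def eW (f : V → ℝ) (hf : ∀ v, f v ≠ 0) :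
    (Finset V → ℝ) ≃ₗ[ℝ] (Finset V → ℝ) :=
  LinearEquiv.ofLinear (Matrix.diagonal (dW f)).mulVecLin
    (Matrix.diagonal fun σ => (dW f σ)⁻¹).mulVecLin
    (by
      rw [← Matrix.mulVecLin_mul, Matrix.diagonal_mul_diagonal]
      have : (fun σ : Finset V => dW f σ * (dW f σ)⁻¹) = fun _ => (1 : ℝ) := by
        funext σ; exact mul_inv_cancel₀ (dW_ne hf σ)
      rw [this, Matrix.diagonal_one, Matrix.mulVecLin_one])
    (by
      rw [← Matrix.mulVecLin_mul, Matrix.diagonal_mul_diagonal]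
      have : (fun σ : Finset V => (dW f σ)⁻¹ * dW f σ) = fun _ => (1 : ℝ) := by
        funext σ; exact inv_mul_cancel₀ (dW_ne hf σ)
      rw [this, Matrix.diagonal_one, Matrix.mulVecLin_one])

lemma eW_apply (f : V → ℝ) (hf : ∀ v, f v ≠ 0) (x : Finset V → ℝ) (σ : Finset V) :
    eW f hf x σ = dW f σ * x σ := by
  simp [eW, Matrix.mulVecLin_apply, Matrix.mulVec_diagonal]

lemma eW_symm_apply (f : V → ℝ) (hf : ∀ v, f v ≠ 0) (x : Finset V → ℝ) (σ : Finset V) :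
    (eW f hf).symm x σ = (dW f σ)⁻¹ * x σ := by
  simp [eW, Matrix.mulVecLin_apply, Matrix.mulVec_diagonal]

/-- The key matrix identity: `∂¹ ∘ D = D ∘ ∂ᶠ`. -/
lemma comm_matrix (f : V → ℝ) :
    Matrix.of (bdCoef (fun _ : V => (1 : ℝ))) * Matrix.diagonal (dW f)
      = Matrix.diagonal (dW f) * Matrix.of (bdCoef f) := by
  ext τ σ
  rw [Matrix.mul_diagonal, Matrix.diagonal_mul]
  simp only [Matrix.of_apply, bdCoef, Finset.sum_mul, Finset.mul_sum]
  refine Finset.sum_congr rfl fun i _ => ?_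
  split_ifs with h
  · have hv : (σ.sort (· ≤ ·)).get i ∈ σ :=
      (Finset.mem_sort _).1 (List.get_mem _ i)
    have := Finset.mul_prod_erase σ f hv
    subst h
    simp only [dW]
    rw [← this]
    ring
  · simp

lemma comm_lin (f : V → ℝ) (hf : ∀ v, f v ≠ 0) :
    (wbd (fun _ : V => (1 : ℝ))) ∘ₗ (eW f hf : (Finset V → ℝ) →ₗ[ℝ] (Finset V → ℝ))
      = (eW f hf : (Finset V → ℝ) →ₗ[ℝ] (Finset V → ℝ)) ∘ₗ wbd f := by
  have h1 : (eW f hf : (Finset V → ℝ) →ₗ[ℝ] (Finset V → ℝ))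
      = (Matrix.diagonal (dW f)).mulVecLin := rfl
  rw [h1, wbd, wbd, ← Matrix.mulVecLin_mul, ← Matrix.mulVecLin_mul, comm_matrix]

lemma comm_apply (f : V → ℝ) (hf : ∀ v, f v ≠ 0) (x : Finset V → ℝ) :
    wbd (fun _ : V => (1 : ℝ)) (eW f hf x) = eW f hf (wbd f x) := by
  have := LinearMap.congr_fun (comm_lin f hf) x
  simpa using this

lemma eW_single (f : V → ℝ) (hf : ∀ v, f v ≠ 0) (σ : Finset V) :
    eW f hf (Pi.single σ (1 : ℝ)) = dW f σ • (Pi.single σ (1 : ℝ) : Finset V → ℝ) := by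
  funext τ
  rw [eW_apply]
  simp only [Pi.smul_apply, smul_eq_mul, Pi.single_apply]
  by_cases h : τ = σ
  · subst h; simp
  · simp [h]

lemma map_chainSp (K : Finset (Finset V)) (f : V → ℝ) (hf : ∀ v, f v ≠ 0) (n : ℕ) :
    Submodule.map (eW f hf : (Finset V → ℝ) →ₗ[ℝ] (Finset V → ℝ)) (chainSp K n)
      = chainSp K n := by
  rw [chainSp, Submodule.map_span]
  apply le_antisymm
  · rw [Submodule.span_le]
    rintro x ⟨y, ⟨σ, hσ, hc, rfl⟩, rfl⟩
    have : (eW f hf : (Finset V → ℝ) →ₗ[ℝ] (Finset V → ℝ)) (Pi.single σ 1)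
        = dW f σ • (Pi.single σ (1 : ℝ) : Finset V → ℝ) := eW_single f hf σ
    rw [this]
    exact Submodule.smul_mem _ _ (Submodule.subset_span ⟨σ, hσ, hc, rfl⟩)
  · rw [Submodule.span_le]
    rintro x ⟨σ, hσ, hc, rfl⟩
    have hx : Pi.single σ (1 : ℝ) = (dW f σ)⁻¹ •
        ((eW f hf : (Finset V → ℝ) →ₗ[ℝ] (Finset V → ℝ)) (Pi.single σ 1)) := by
      show Pi.single σ (1 : ℝ) = (dW f σ)⁻¹ • (eW f hf (Pi.single σ (1 : ℝ)))
      rw [eW_single, smul_smul, inv_mul_cancel₀ (dW_ne hf σ), one_smul]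
    rw [hx]
    exact Submodule.smul_mem _ _ (Submodule.subset_span ⟨_, ⟨σ, hσ, hc, rfl⟩, rfl⟩)

lemma map_ker (f : V → ℝ) (hf : ∀ v, f v ≠ 0) :
    Submodule.map (eW f hf : (Finset V → ℝ) →ₗ[ℝ] (Finset V → ℝ))
        (LinearMap.ker (wbd f))
      = LinearMap.ker (wbd (fun _ : V => (1 : ℝ))) := by
  ext x
  simp only [Submodule.mem_map, LinearMap.mem_ker]
  constructor
  · rintro ⟨y, hy, rfl⟩
    show wbd (fun _ : V => (1 : ℝ)) (eW f hf y) = 0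
    rw [comm_apply, hy, map_zero]
  · intro hx
    refine ⟨(eW f hf).symm x, ?_, (eW f hf).apply_symm_apply x⟩
    apply (eW f hf).injective
    rw [← comm_apply, (eW f hf).apply_symm_apply, hx, map_zero]

lemma map_cycles (K : Finset (Finset V)) (f : V → ℝ) (hf : ∀ v, f v ≠ 0) (n : ℕ) :
    Submodule.map (eW f hf : (Finset V → ℝ) →ₗ[ℝ] (Finset V → ℝ)) (cycles K f n)
      = cycles K (fun _ => (1 : ℝ)) n := by
  rw [cycles, cycles,
    Submodule.map_inf ((eW f hf : (Finset V → ℝ) →ₗ[ℝ] (Finset V → ℝ)))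
      (eW f hf).injective, map_chainSp, map_ker]

lemma map_bdries (K : Finset (Finset V)) (f : V → ℝ) (hf : ∀ v, f v ≠ 0) (n : ℕ) :
    Submodule.map (eW f hf : (Finset V → ℝ) →ₗ[ℝ] (Finset V → ℝ)) (bdries K f n)
      = bdries K (fun _ => (1 : ℝ)) n := by
  rw [bdries, bdries, ← Submodule.map_comp, ← comm_lin f hf, Submodule.map_comp,
    map_chainSp]

/-- For a nowhere-vanishing weight `f`, the weighted homology `Hₙ(K,f,f;ℝ)` is
linearly isomorphic to the ordinary simplicial homology `Hₙ(K;ℝ)` (the weighted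
homology for the constant weight `1`). -/
theorem stmt11 (K : Finset (Finset V)) (hK : IsComplex K) (f : V → ℝ)
    (hf : ∀ v : V, f v ≠ 0) (n : ℕ) :
    Nonempty (wH K f n ≃ₗ[ℝ] wH K (fun _ => (1 : ℝ)) n) := by
  set e := eW f hf with he
  -- restricted equivalence on cycles
  let eC : ↥(cycles K f n) ≃ₗ[ℝ] ↥(cycles K (fun _ => (1 : ℝ)) n) :=
    (e.submoduleMap (cycles K f n)).trans
      (LinearEquiv.ofEq _ _ (map_cycles K f hf n))
  have heC : ∀ y : ↥(cycles K f n), ((eC y : Finset V → ℝ)) = e y := fun y => rfl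
  refine ⟨Submodule.Quotient.equiv _ _ eC ?_⟩
  ext x
  simp only [Submodule.mem_map, Submodule.mem_comap, Submodule.subtype_apply]
  constructor
  · rintro ⟨y, hy, rfl⟩
    change (e (y : Finset V → ℝ)) ∈ bdries K (fun _ => (1 : ℝ)) n
    rw [← map_bdries K f hf n]
    exact ⟨y, hy, rfl⟩
  · intro hx
    rw [← map_bdries K f hf n] at hx
    obtain ⟨y, hy, hyx⟩ := hx
    have hyc : y ∈ cycles K f n := by
      have h2 : (x : Finset V → ℝ) ∈
          Submodule.map (e : (Finset V → ℝ) →ₗ[ℝ] (Finset V → ℝ)) (cycles K f n) := by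
        rw [he, map_cycles K f hf n]; exact x.2
      obtain ⟨z, hz, hzx⟩ := h2
      have hzy : z = y := e.injective (hzx.trans hyx.symm)
      rwa [hzy] at hz
    refine ⟨⟨y, hyc⟩, hy, ?_⟩
    apply Subtype.ext
    change (e y : Finset V → ℝ) = _
    exact hyx
end
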